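/- Let N be a positive integer, h, g : ZMod N → ℂ filters with |ĥ(k)|² + |ĝ(k)|² = 1 for every k ∈ ZMod N, and J ≥ 1. For x : ZMod N → ℂ let W_j x (for 1 ≤ j ≤ J) be the function whose discrete Fourier transform is k ↦ ĥ(2^{j−1}·k) · ∏_{l=0}^{j−2} ĝ(2^l·k) · x̂(k), and let V_J x be the function whose discrete Fourier transform is k ↦ ∏_{l=0}^{J−1} ĝ(2^l·k) · x̂(k) (products over the empty range equal 1, and 2^l·k is multiplication in ZMod N). Then for all x, y : ZMod N → ℂ: ∑_t x(t) conj(y(t)) = ∑_{j=1}^{J} ∑_t (W_j x)(t) conj((W_j y)(t)) + ∑_t (V_J x)(t) conj((V_J y)(t)). That is, the level-J MODWT pyramid exactly preserves cross-products, so the realized covariance equals the sum over all wavelet scales plus the scaling level of the filtered cross-products. -/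

import Mathlib

open Complex Finset

/-- The discrete Fourier transform `â(k) = ∑_t a(t) e^{−2πi k t / N}`. -/
noncomputable def dft {N : ℕ} [NeZero N] (a : ZMod N → ℂ) (k : ZMod N) : ℂ :=
  ∑ t : ZMod N, a t * Complex.exp (-(2 * (Real.pi : ℂ) * k.val * t.val / N) * Complex.I)

lemma dft_eq_zdft {N : ℕ} [NeZero N] (a : ZMod N → ℂ) (k : ZMod N) :
    dft a k = ZMod.dft a k := by
  rw [ZMod.dft_apply, dft]
  refine Finset.sum_congr rfl fun t _ => ?_
  rw [smul_eq_mul, mul_comm]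
  congr 1
  have h1 : -(t * k) = ((-((t.val : ℤ) * (k.val : ℤ)) : ℤ) : ZMod N) := by
    push_cast
    simp [ZMod.natCast_val, ZMod.cast_id]
  rw [h1, ZMod.stdAddChar_coe]
  congr 1
  push_cast
  ring

lemma conj_stdAddChar {N : ℕ} [NeZero N] (z : ZMod N) :
    (starRingEnd ℂ) (ZMod.stdAddChar z) = ZMod.stdAddChar (-z) := by
  have h1 : z = (((z.val : ℤ)) : ZMod N) := by simp [ZMod.natCast_val, ZMod.cast_id]
  rw [h1, ← Int.cast_neg, ZMod.stdAddChar_coe, ZMod.stdAddChar_coe, ← Complex.exp_conj]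
  congr 1
  simp only [map_div₀, map_mul, Complex.conj_I, map_intCast, map_natCast, map_ofNat,
    Complex.conj_ofReal]
  push_cast
  ring

lemma char_orth {N : ℕ} [NeZero N] (t : ZMod N) :
    ∑ k : ZMod N, ZMod.stdAddChar (t * k) = if t = 0 then (N : ℂ) else 0 := by
  split_ifs with h
  · simp [h, Finset.card_univ]
  · exact AddChar.sum_eq_zero_of_ne_one (ZMod.isPrimitive_stdAddChar N h)

lemma plancherel {N : ℕ} [NeZero N] (a b : ZMod N → ℂ) :
    (N : ℂ) * ∑ t : ZMod N, a t * (starRingEnd ℂ) (b t)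
      = ∑ k : ZMod N, dft a k * (starRingEnd ℂ) (dft b k) := by
  simp only [dft_eq_zdft, ZMod.dft_apply, smul_eq_mul]
  have expand : ∀ k : ZMod N,
      (∑ t : ZMod N, ZMod.stdAddChar (-(t * k)) * a t)
        * (starRingEnd ℂ) (∑ s : ZMod N, ZMod.stdAddChar (-(s * k)) * b s)
      = ∑ t : ZMod N, ∑ s : ZMod N,
          (a t * (starRingEnd ℂ) (b s)) * ZMod.stdAddChar ((s - t) * k) := by
    intro k
    rw [map_sum, Finset.sum_mul_sum]
    refine Finset.sum_congr rfl fun t _ => Finset.sum_congr rfl fun s _ => ?_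
    rw [map_mul, conj_stdAddChar, neg_neg]
    rw [show (s - t) * k = -(t * k) + s * k by ring, AddChar.map_add_eq_mul]
    ring
  rw [Finset.sum_congr rfl fun k _ => expand k]
  rw [Finset.sum_comm]
  have inner : ∀ t : ZMod N,
      (∑ k : ZMod N, ∑ s : ZMod N,
          (a t * (starRingEnd ℂ) (b s)) * ZMod.stdAddChar ((s - t) * k))
      = (N : ℂ) * (a t * (starRingEnd ℂ) (b t)) := by
    intro t
    rw [Finset.sum_comm]
    have : ∀ s : ZMod N,
        (∑ k : ZMod N, (a t * (starRingEnd ℂ) (b s)) * ZMod.stdAddChar ((s - t) * k))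
        = (a t * (starRingEnd ℂ) (b s)) * (if s - t = 0 then (N : ℂ) else 0) := by
      intro s
      rw [← Finset.mul_sum, char_orth]
    rw [Finset.sum_congr rfl fun s _ => this s]
    simp only [sub_eq_zero, mul_ite, mul_zero]
    rw [Finset.sum_ite_eq' Finset.univ t (fun s => a t * (starRingEnd ℂ) (b s) * (N:ℂ))]
    simp [mul_comm]
  rw [Finset.sum_congr rfl fun t _ => inner t, ← Finset.mul_sum]

lemma spectral_sum {J : ℕ} (hc gc : ℕ → ℝ) (hg : ∀ i, hc i + gc i = 1) :
    (∑ i ∈ Finset.range J, hc i * ∏ l ∈ Finset.range i, gc l)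
      + ∏ l ∈ Finset.range J, gc l = 1 := by
  induction J with
  | zero => simp
  | succ n ih =>
    rw [Finset.sum_range_succ, Finset.prod_range_succ]
    linear_combination ih + (∏ l ∈ Finset.range n, gc l) * hg n

/-- The level-`J` MODWT pyramid exactly preserves cross-products: the realized covariance
equals the sum over all wavelet scales plus the scaling level of the filtered
cross-products. -/
theorem modwt_pyramid_preserves_cross_products (N : ℕ) [NeZero N] (h g : ZMod N → ℂ)
    (hgain : ∀ k : ZMod N, ‖dft h k‖ ^ 2 + ‖dft g k‖ ^ 2 = 1)
    (J : ℕ) (hJ : 1 ≤ J) (x y : ZMod N → ℂ)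
    (Wx Wy : ℕ → ZMod N → ℂ) (Vx Vy : ZMod N → ℂ)
    (hWx : ∀ j : ℕ, 1 ≤ j → j ≤ J → ∀ k : ZMod N,
      dft (Wx j) k = dft h ((2 : ZMod N) ^ (j - 1) * k) *
        (∏ l ∈ Finset.range (j - 1), dft g ((2 : ZMod N) ^ l * k)) * dft x k)
    (hWy : ∀ j : ℕ, 1 ≤ j → j ≤ J → ∀ k : ZMod N,
      dft (Wy j) k = dft h ((2 : ZMod N) ^ (j - 1) * k) *
        (∏ l ∈ Finset.range (j - 1), dft g ((2 : ZMod N) ^ l * k)) * dft y k)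
    (hVx : ∀ k : ZMod N,
      dft Vx k = (∏ l ∈ Finset.range J, dft g ((2 : ZMod N) ^ l * k)) * dft x k)
    (hVy : ∀ k : ZMod N,
      dft Vy k = (∏ l ∈ Finset.range J, dft g ((2 : ZMod N) ^ l * k)) * dft y k) :
    (∑ t : ZMod N, x t * (starRingEnd ℂ) (y t))
      = (∑ j ∈ Finset.Icc 1 J, ∑ t : ZMod N, Wx j t * (starRingEnd ℂ) (Wy j t))
        + ∑ t : ZMod N, Vx t * (starRingEnd ℂ) (Vy t) := by
  have hN : (N : ℂ) ≠ 0 := Nat.cast_ne_zero.mpr (NeZero.ne N)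
  -- key spectral identity per frequency
  have normsq_c : ∀ z : ℂ, ((‖z‖ ^ 2 : ℝ) : ℂ) = z * (starRingEnd ℂ) z := by
    intro z
    rw [Complex.mul_conj, Complex.normSq_eq_norm_sq]
  have prod_normsq : ∀ (m : ℕ) (f : ℕ → ℂ),
      ((∏ l ∈ Finset.range m, ‖f l‖ ^ 2 : ℝ) : ℂ)
        = (∏ l ∈ Finset.range m, f l) * (starRingEnd ℂ) (∏ l ∈ Finset.range m, f l) := by
    intro m f
    rw [map_prod, ← Finset.prod_mul_distrib]
    push_cast
    exact Finset.prod_congr rfl fun l _ => by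
      have := normsq_c (f l); push_cast at this; exact this
  have key : ∀ k : ZMod N,
      (∑ j ∈ Finset.Icc 1 J, dft (Wx j) k * (starRingEnd ℂ) (dft (Wy j) k))
        + dft Vx k * (starRingEnd ℂ) (dft Vy k)
      = dft x k * (starRingEnd ℂ) (dft y k) := by
    intro k
    have hterm : ∀ j ∈ Finset.Icc 1 J,
        dft (Wx j) k * (starRingEnd ℂ) (dft (Wy j) k)
        = ((‖dft h ((2 : ZMod N) ^ (j-1) * k)‖ ^ 2
              * ∏ l ∈ Finset.range (j-1), ‖dft g ((2 : ZMod N) ^ l * k)‖ ^ 2 : ℝ) : ℂ)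
            * (dft x k * (starRingEnd ℂ) (dft y k)) := by
      intro j hj
      rw [Finset.mem_Icc] at hj
      rw [hWx j hj.1 hj.2 k, hWy j hj.1 hj.2 k, Complex.ofReal_mul,
        normsq_c (dft h ((2 : ZMod N) ^ (j-1) * k)),
        prod_normsq (j-1) (fun l => dft g ((2 : ZMod N) ^ l * k))]
      simp only [map_mul]
      ring
    have hVterm : dft Vx k * (starRingEnd ℂ) (dft Vy k)
        = ((∏ l ∈ Finset.range J, ‖dft g ((2 : ZMod N) ^ l * k)‖ ^ 2 : ℝ) : ℂ)
            * (dft x k * (starRingEnd ℂ) (dft y k)) := by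
      rw [hVx k, hVy k, prod_normsq J (fun l => dft g ((2 : ZMod N) ^ l * k))]
      simp only [map_mul]
      ring
    rw [Finset.sum_congr rfl hterm, hVterm, ← Finset.sum_mul, ← add_mul]
    have reidx : (∑ j ∈ Finset.Icc 1 J,
        ((‖dft h ((2 : ZMod N) ^ (j-1) * k)‖ ^ 2
            * ∏ l ∈ Finset.range (j-1), ‖dft g ((2 : ZMod N) ^ l * k)‖ ^ 2 : ℝ) : ℂ))
        = ∑ i ∈ Finset.range J,
            ((‖dft h ((2 : ZMod N) ^ i * k)‖ ^ 2
              * ∏ l ∈ Finset.range i, ‖dft g ((2 : ZMod N) ^ l * k)‖ ^ 2 : ℝ) : ℂ) := by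
      rw [← Finset.Ico_add_one_right_eq_Icc, Finset.sum_Ico_eq_sum_range]
      simp
    rw [reidx, ← Complex.ofReal_sum, ← Complex.ofReal_add,
      spectral_sum (fun i => ‖dft h ((2 : ZMod N) ^ i * k)‖ ^ 2)
        (fun i => ‖dft g ((2 : ZMod N) ^ i * k)‖ ^ 2)
        (fun i => hgain ((2 : ZMod N) ^ i * k)), Complex.ofReal_one, one_mul]
  -- assemble with Plancherel
  have main : (N : ℂ) * (∑ t : ZMod N, x t * (starRingEnd ℂ) (y t))
      = (N : ℂ) * ((∑ j ∈ Finset.Icc 1 J, ∑ t : ZMod N, Wx j t * (starRingEnd ℂ) (Wy j t))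
        + ∑ t : ZMod N, Vx t * (starRingEnd ℂ) (Vy t)) := by
    rw [plancherel x y, mul_add, Finset.mul_sum]
    rw [Finset.sum_congr rfl fun j _ => plancherel (Wx j) (Wy j), plancherel Vx Vy]
    rw [← Finset.sum_congr rfl fun k _ => key k]
    rw [Finset.sum_add_distrib, Finset.sum_comm]
  exact mul_left_cancel₀ hN main
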